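/- Both (S_1, S_finish, [0,1], (1, ∞))↓ and (S_1, S_start, [0,1], [1, ∞))↓ hold: from every configuration in which robot r is in state S_1 with observed distance at most 1 and robot s is in state S_finish with observed distance greater than 1, and from every configuration in which robot r is in state S_1 with observed distance at most 1 and robot s is in state S_start with observed distance at least 1, every fair SSynch execution of Algorithm 1 solves rendezvous. -/
import Mathlib


/-- Points in the plane. -/
abbrev Pt := EuclideanSpace ℝ (Fin 2)

/-- Observed directions. -/
inductive Dir | left | right
deriving DecidableEq

/-- The six internal states of Algorithm 1. -/
inductive St | start | s1 | s2 (d : Dir) | s3 | finish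
deriving DecidableEq

/-- A local coordinate frame: an orthogonal linear map of the plane. -/
abbrev Frame := Pt ≃ₗᵢ[ℝ] Pt

/-- Observed direction of a local vector `v`: `right` if its first coordinate is
positive, or is zero with positive second coordinate; `left` otherwise. -/
noncomputable def obsDir (v : Pt) : Dir :=
  if 0 < v 0 ∨ (v 0 = 0 ∧ 0 < v 1) then Dir.right else Dir.left

/-- Local vector observed by a robot with unit distance `u` and frame `A`,
located at `p`, looking at the other robot at `q`. -/
noncomputable def obsVec (u : ℝ) (A : Frame) (p q : Pt) : Pt := u⁻¹ • (A (q - p))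

/-- Observed distance. -/
noncomputable def obsDist (u : ℝ) (p q : Pt) : ℝ := ‖q - p‖ / u

/-- Algorithm 1: given the current state, the observed distance `d` and the
observed direction `dir`, returns the new state and the coefficient `μ` such
that the (global) destination is `p + μ • (q - p)` (i.e. local destination `μ • v`). -/
noncomputable def algo1 (s : St) (d : ℝ) (dir : Dir) : St × ℝ :=
  if d = 0 then (s, 0)
  else match s with
  | .start => if d < 1 then (.s1, 1 - 1/d) else (.s2 dir, 1)
  | .s1 => if d ≤ 1 then (.finish, 0) else (.s2 dir, 1)
  | .s2 d' =>
      if dir = d' then (.finish, 1)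
      else if d < 1/2 then (.finish, 0)
      else if d < 1 then (.s3, 1/2)
      else (.s2 d', 1/2)
  | .s3 => if d < 1/4 then (.finish, 0) else (.finish, 1)
  | .finish => if d ≤ 1 then (.finish, 0) else (.finish, 1)

/-- A configuration: positions and internal states of the two robots
(robot `r` is `false`, robot `s` is `true`). -/
structure Config where
  pos : Bool → Pt
  st : Bool → St

/-- Result (new position, new state) of one activation of robot `i`. -/
noncomputable def stepRobot (u : Bool → ℝ) (A : Bool → Frame) (c : Config) (i : Bool) :
    Pt × St :=
  let p := c.pos i
  let q := c.pos (!i)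
  let d := obsDist (u i) p q
  let dir := obsDir (obsVec (u i) (A i) p q)
  let r := algo1 (c.st i) d dir
  (p + r.2 • (q - p), r.1)

/-- One synchronous round in which exactly the robots `i` with `act i = true`
are activated; both activated robots observe the same (pre-round) configuration,
and rigidly reach their computed destinations. -/
noncomputable def stepConfig (u : Bool → ℝ) (A : Bool → Frame) (act : Bool → Bool)
    (c : Config) : Config where
  pos i := if act i then (stepRobot u A c i).1 else c.pos i
  st i := if act i then (stepRobot u A c i).2 else c.st i

/-- The configuration after `n` rounds of the SSynch execution of Algorithm 1
under schedule `sched`, starting from `c0`. -/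
noncomputable def run (u : Bool → ℝ) (A : Bool → Frame) (sched : ℕ → Bool → Bool)
    (c0 : Config) : ℕ → Config
  | 0 => c0
  | n + 1 => stepConfig u A (sched n) (run u A sched c0 n)

/-- A legal fair SSynch schedule: at every round a nonempty set of robots is
activated, and each robot is activated infinitely often. -/
def FairSched (sched : ℕ → Bool → Bool) : Prop :=
  (∀ n, sched n false = true ∨ sched n true = true) ∧
  (∀ i n, ∃ m, n ≤ m ∧ sched m i = true)

/-- Rendezvous is solved: from some round on, the two robots occupy the same
point and never move again. -/
noncomputable def Solves (u : Bool → ℝ) (A : Bool → Frame) (sched : ℕ → Bool → Bool)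
    (c0 : Config) : Prop :=
  ∃ N : ℕ, ∀ n, N ≤ n → ∀ i, (run u A sched c0 n).pos i = (run u A sched c0 N).pos false

/-- Conditions on a robot: one of the six internal states, or `S₂⁼` / `S₂≠`. -/
inductive Cond | start | s1 | s2 (d : Dir) | s2eq | s2ne | s3 | finish

/-- A robot in state `s` whose currently observed direction is `dir`
satisfies the condition. -/
def Cond.sat : Cond → St → Dir → Prop
  | .start, s, _ => s = .start
  | .s1, s, _ => s = .s1
  | .s2 d', s, _ => s = .s2 d'
  | .s2eq, s, dir => s = .s2 dir
  | .s2ne, s, dir => ∃ d', s = St.s2 d' ∧ d' ≠ dir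
  | .s3, s, _ => s = .s3
  | .finish, s, _ => s = .finish

/-- `(S_a, S_b, I_a, I_b)↓` : for every choice of the units and frames, from
every configuration in which robot `r` satisfies condition `Ca` with observed
distance in `Ia` and robot `s` satisfies condition `Cb` with observed distance
in `Ib`, every fair SSynch execution of Algorithm 1 solves Rendezvous. -/
noncomputable def Down (Ca Cb : Cond) (Ia Ib : Set ℝ) : Prop :=
  ∀ (u : Bool → ℝ) (A : Bool → Frame), (∀ i, 0 < u i) →
    ∀ c0 : Config,
      Ca.sat (c0.st false)
        (obsDir (obsVec (u false) (A false) (c0.pos false) (c0.pos true))) →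
      obsDist (u false) (c0.pos false) (c0.pos true) ∈ Ia →
      Cb.sat (c0.st true)
        (obsDir (obsVec (u true) (A true) (c0.pos true) (c0.pos false))) →
      obsDist (u true) (c0.pos true) (c0.pos false) ∈ Ib →
      ∀ sched : ℕ → Bool → Bool, FairSched sched → Solves u A sched c0


private lemma solves_aux (u : Bool → ℝ) (A : Bool → Frame) (hu : ∀ i, 0 < u i)
    (c0 : Config) (hr : c0.st false = .s1)
    (hdr : obsDist (u false) (c0.pos false) (c0.pos true) ≤ 1)
    (hs : (c0.st true = .finish ∧ 1 < obsDist (u true) (c0.pos true) (c0.pos false)) ∨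
          (c0.st true = .start ∧ 1 ≤ obsDist (u true) (c0.pos true) (c0.pos false)))
    (sched : ℕ → Bool → Bool) (hfair : FairSched sched) :
    Solves u A sched c0 := by
  classical
  set p := c0.pos false with hp
  set q := c0.pos true with hq
  have hds : 1 ≤ obsDist (u true) q p := by
    rcases hs with ⟨_, h⟩ | ⟨_, h⟩
    · exact h.le
    · exact h
  have hDs : u true ≤ ‖p - q‖ := by
    have h := hds
    rw [obsDist, one_le_div (hu true)] at h
    exact h
  have hD : 0 < ‖q - p‖ := by
    rw [norm_sub_rev]
    linarith [hu true]
  have hdr0 : 0 < obsDist (u false) p q := by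
    rw [obsDist]
    exact div_pos hD (hu false)
  -- activated robot r does not move and ends in finish
  have stepR : ∀ c : Config, c.pos false = p → c.pos true = q →
      (c.st false = .s1 ∨ c.st false = .finish) →
      stepRobot u A c false = (p, .finish) := by
    intro c h1 h2 h3
    simp only [stepRobot, Bool.not_false, h1, h2]
    rcases h3 with h | h <;>
      simp [h, algo1, hdr0.ne', hdr]
  -- activated robot s moves to p
  have stepS : ∀ c : Config, c.pos false = p → c.pos true = q →
      c.st true = c0.st true → (stepRobot u A c true).1 = p := by
    intro c h1 h2 h3
    have hne : obsDist (u true) q p ≠ 0 := by linarith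
    simp only [stepRobot, Bool.not_true, h1, h2, h3]
    rcases hs with ⟨hst, hgt⟩ | ⟨hst, hge⟩
    · simp [hst, algo1, hne, not_le.mpr hgt]
    · simp [hst, algo1, hne, not_lt.mpr hge]
  -- if both robots coincide, nobody ever moves
  have stepZ : ∀ (c : Config) (x : Pt), (∀ i, c.pos i = x) → ∀ act i,
      (stepConfig u A act c).pos i = x := by
    intro c x hx act i
    simp only [stepConfig]
    split
    · simp [stepRobot, hx, obsDist, algo1]
    · exact hx i
  -- invariant before the first activation of s
  have key : ∀ n, (∀ m, m < n → sched m true = false) →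
      (run u A sched c0 n).pos false = p ∧ (run u A sched c0 n).pos true = q ∧
      ((run u A sched c0 n).st false = .s1 ∨ (run u A sched c0 n).st false = .finish) ∧
      (run u A sched c0 n).st true = c0.st true := by
    intro n
    induction n with
    | zero => exact fun _ => ⟨rfl, rfl, Or.inl hr, rfl⟩
    | succ n ih =>
      intro h
      obtain ⟨h1, h2, h3, h4⟩ := ih (fun m hm => h m (hm.trans (Nat.lt_succ_self n)))
      have hsn : sched n true = false := h n (Nat.lt_succ_self n)
      simp only [run, stepConfig, hsn]
      by_cases ha : sched n false = true
      · have hst := stepR _ h1 h2 h3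
        simp [ha, hst, h1, h2, h4]
      · have ha' : sched n false = false := by simpa using ha
        simp [ha', h1, h2, h3, h4]
  have hex : ∃ m, 0 ≤ m ∧ sched m true = true := hfair.2 true 0
  set N := Nat.find hex with hNdef
  have hNtrue : sched N true = true := (Nat.find_spec hex).2
  have hNmin : ∀ m, m < N → sched m true = false := by
    intro m hm
    have := Nat.find_min hex hm
    simpa using this
  obtain ⟨h1, h2, h3, h4⟩ := key N hNmin
  have hrun : ∀ i, (run u A sched c0 (N + 1)).pos i = p := by
    intro i
    simp only [run, stepConfig]
    cases i
    · by_cases ha : sched N false = true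
      · simp [ha, stepR _ h1 h2 h3]
      · have ha' : sched N false = false := by simpa using ha
        simp [ha', h1]
    · simp [hNtrue, stepS _ h1 h2 h4]
  have final : ∀ k i, (run u A sched c0 (N + 1 + k)).pos i = p := by
    intro k
    induction k with
    | zero => exact hrun
    | succ k ih =>
      intro i
      have hEq : N + 1 + (k + 1) = (N + 1 + k) + 1 := by omega
      rw [hEq]
      simp only [run]
      exact stepZ _ p ih _ i
  refine ⟨N + 1, fun n hn i => ?_⟩
  rw [hrun false]
  have hEq : n = N + 1 + (n - (N + 1)) := by omega
  rw [hEq]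
  exact final _ i

/-- Lemma 9: `(S_1, S_finish, [0,1], (1, ∞))↓` and `(S_1, S_start, [0,1], [1, ∞))↓`. -/
theorem lemma_l6 :
    Down Cond.s1 Cond.finish (Set.Icc (0 : ℝ) 1) (Set.Ioi (1 : ℝ)) ∧
    Down Cond.s1 Cond.start (Set.Icc (0 : ℝ) 1) (Set.Ici (1 : ℝ)) := by
  constructor
  · intro u A hu c0 hr hdr hsC hds sched hfair
    exact solves_aux u A hu c0 hr hdr.2 (Or.inl ⟨hsC, hds⟩) sched hfair
  · intro u A hu c0 hr hdr hsC hds sched hfair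
    exact solves_aux u A hu c0 hr hdr.2 (Or.inr ⟨hsC, hds⟩) sched hfair
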